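/- arXiv:2605.04452 — 3 statements merged into one kernel-verified Lean document; each statement's English description precedes it below -/
import Mathlib

section
/- Let W be a nonempty set of states, N a set of agents, and E : Set N → Set (Set W) a playable effectivity function. For every coalition C ⊆ N and every X ⊆ W, if FC(C,X) holds then FI(N∖C, X) holds: if C can enforce both X and its complement, then the complementary coalition can enforce neither X nor its complement. -/
structure Playable (W N : Type*) (E : Set N → Set (Set W)) : Prop where
  liveness : ∀ C : Set N, (∅ : Set W) ∉ E C
  safety : ∀ C : Set N, (Set.univ : Set W) ∈ E C
  outcomeMono : ∀ (C : Set N) (X Y : Set W), X ∈ E C → X ⊆ Y → Y ∈ E C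
  superadd : ∀ (C D : Set N) (X Y : Set W),
      C ∩ D = ∅ → X ∈ E C → Y ∈ E D → X ∩ Y ∈ E (C ∪ D)
  nMax : ∀ X : Set W, X ∉ E (∅ : Set N) ↔ Xᶜ ∈ E (Set.univ : Set N)


def FC {W N : Type*} (E : Set N → Set (Set W)) (C : Set N) (X : Set W) : Prop :=
  X ∈ E C ∧ Xᶜ ∈ E C

def PD {W N : Type*} (E : Set N → Set (Set W)) (C : Set N) (X : Set W) : Prop :=
  X ∈ E C ∧ Xᶜ ∉ E C

def AD {W N : Type*} (E : Set N → Set (Set W)) (C : Set N) (X : Set W) : Prop :=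
  X ∉ E C ∧ Xᶜ ∈ E C

def FI {W N : Type*} (E : Set N → Set (Set W)) (C : Set N) (X : Set W) : Prop :=
  X ∉ E C ∧ Xᶜ ∉ E C

/-- One-way polarity: Full Control for `C` entails Full Inability for the
complementary coalition. -/
theorem fc_implies_fi_complement {W N : Type*} [Nonempty W]
    (E : Set N → Set (Set W)) (hE : Playable W N E)
    (C : Set N) (X : Set W) :
    FC E C X → FI E Cᶜ X := by
  rintro ⟨hX, hXc⟩
  constructor
  · intro h
    have := hE.superadd C Cᶜ Xᶜ X (by simp) hXc h
    simp at this
    exact hE.liveness _ this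
  · intro h
    have := hE.superadd C Cᶜ X Xᶜ (by simp) hX h
    simp at this
    exact hE.liveness _ this
end

section
/- Let W be a set of states, N a set of agents, and E : Set N → Set (Set W) an effectivity function satisfying outcome monotonicity (if X ∈ E(C) and X ⊆ Y then Y ∈ E(C)). Fix a coalition C ⊆ N. Then each of the four power regions R_FC(C) = {X : X ∈ E(C) ∧ W∖X ∈ E(C)}, R_PD(C) = {X : X ∈ E(C) ∧ W∖X ∉ E(C)}, R_AD(C) = {X : X ∉ E(C) ∧ W∖X ∈ E(C)}, and R_FI(C) = {X : X ∉ E(C) ∧ W∖X ∉ E(C)} is order-convex in the powerset of W: if X ⊆ Y ⊆ Z and both X and Z belong to one of these regions, then Y belongs to the same region. -/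
/-- The four power regions of subsets of `W` for coalition `C`. -/
def Rfc {W N : Type*} (E : Set N → Set (Set W)) (C : Set N) : Set (Set W) :=
  {X | X ∈ E C ∧ Xᶜ ∈ E C}

def Rpd {W N : Type*} (E : Set N → Set (Set W)) (C : Set N) : Set (Set W) :=
  {X | X ∈ E C ∧ Xᶜ ∉ E C}

def Rad {W N : Type*} (E : Set N → Set (Set W)) (C : Set N) : Set (Set W) :=
  {X | X ∉ E C ∧ Xᶜ ∈ E C}

def Rfi {W N : Type*} (E : Set N → Set (Set W)) (C : Set N) : Set (Set W) :=
  {X | X ∉ E C ∧ Xᶜ ∉ E C}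

/-- A family of subsets is order-convex in the powerset lattice. -/
def OrderConvex {W : Type*} (S : Set (Set W)) : Prop :=
  ∀ X Y Z : Set W, X ∈ S → Z ∈ S → X ⊆ Y → Y ⊆ Z → Y ∈ S

/-- Convexity of power regions: each of the four power regions is
order-convex in the powerset of `W`. -/
theorem power_regions_order_convex {W N : Type*} (E : Set N → Set (Set W))
    (hmono : ∀ (C : Set N) (X Y : Set W), X ∈ E C → X ⊆ Y → Y ∈ E C)
    (C : Set N) :
    OrderConvex (Rfc E C) ∧ OrderConvex (Rpd E C) ∧
    OrderConvex (Rad E C) ∧ OrderConvex (Rfi E C) := by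

  refine ⟨?_, ?_, ?_, ?_⟩ <;>
    rintro X Y Z ⟨h1, h2⟩ ⟨h3, h4⟩ hXY hYZ
  · exact ⟨hmono C X Y h1 hXY, hmono C Zᶜ Yᶜ h4 (Set.compl_subset_compl.mpr hYZ)⟩
  · exact ⟨hmono C X Y h1 hXY, fun h => h2 (hmono C Yᶜ Xᶜ h (Set.compl_subset_compl.mpr hXY))⟩
  · exact ⟨fun h => h3 (hmono C Y Z h hYZ), hmono C Zᶜ Yᶜ h4 (Set.compl_subset_compl.mpr hYZ)⟩
  · exact ⟨fun h => h3 (hmono C Y Z h hYZ), fun h => h2 (hmono C Yᶜ Xᶜ h (Set.compl_subset_compl.mpr hXY))⟩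
end

section
/- Let W be a nonempty set of states, N a set of agents, and E : Set N → Set (Set W) a playable effectivity function. For every coalition C ⊆ N and every X ⊆ W: (1) if PD(C,X) holds, then either PD(N∖C, X) or FI(N∖C, X) holds; (2) if AD(C,X) holds, then either AD(N∖C, X) or FI(N∖C, X) holds. -/
lemma key {W N : Type*} {E : Set N → Set (Set W)} (hE : Playable W N E)
    {C : Set N} {X : Set W} (h : X ∈ E C) : Xᶜ ∉ E Cᶜ := by
  intro hc
  have := hE.superadd C Cᶜ X Xᶜ (by simp) h hc
  simp at this
  exact hE.liveness _ this

/-- Category-level constraints on the complementary coalition in playable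
models: PD for `C` forces PD or FI for the complement, and AD for `C` forces
AD or FI for the complement. -/
theorem complement_category_constraints {W N : Type*} [Nonempty W]
    (E : Set N → Set (Set W)) (hE : Playable W N E)
    (C : Set N) (X : Set W) :
    (PD E C X → PD E Cᶜ X ∨ FI E Cᶜ X) ∧
    (AD E C X → AD E Cᶜ X ∨ FI E Cᶜ X) := by
  constructor
  · rintro ⟨h1, _⟩
    have hc := key hE h1
    by_cases h : X ∈ E Cᶜ
    · exact Or.inl ⟨h, hc⟩
    · exact Or.inr ⟨h, hc⟩
  · rintro ⟨_, h2⟩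
    have hc := key hE h2
    rw [compl_compl] at hc
    by_cases h : Xᶜ ∈ E Cᶜ
    · exact Or.inl ⟨hc, h⟩
    · exact Or.inr ⟨hc, h⟩
end
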